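/- Let R be a commutative ring, σ an endomorphism of R, and M an R-module. If R has only trivial idempotents, then the Nagata extension N of R by M and σ is i-reversible. -/

import Mathlib

/-- A ring is *i-reversible* if whenever `a * b` is a non-zero idempotent, `b * a` is an
idempotent. -/
def IsIReversible (S : Type*) [Ring S] : Prop :=
  ∀ a b : S, IsIdempotentElem (a * b) → a * b ≠ 0 → IsIdempotentElem (b * a)

/-- A ring has only trivial idempotents if its only idempotents are `0` and `1`. -/
def HasOnlyTrivialIdempotents (S : Type*) [Ring S] : Prop :=
  ∀ e : S, IsIdempotentElem e → e = 0 ∨ e = 1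

/-- The Nagata extension of a commutative ring `R` by an `R`-module `M` and an endomorphism
`σ` of `R`: the underlying set is `R × M`, with multiplication
`(r₁, m₁) * (r₂, m₂) = (r₁ * r₂, σ r₁ • m₂ + r₂ • m₁)`. -/
def NagataExt (R M : Type*) [CommRing R] [AddCommGroup M] [Module R M] (σ : R →+* R) :
    Type _ := R × M

namespace NagataExt

variable {R M : Type*} [CommRing R] [AddCommGroup M] [Module R M] {σ : R →+* R}

instance : AddCommGroup (NagataExt R M σ) := inferInstanceAs (AddCommGroup (R × M))

instance : Mul (NagataExt R M σ) :=
  ⟨fun a b => ((a.1 * b.1 : R), (σ a.1 • b.2 + b.1 • a.2 : M))⟩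

instance : One (NagataExt R M σ) := ⟨((1 : R), (0 : M))⟩

lemma mul_def (a b : NagataExt R M σ) :
    a * b = ((a.1 * b.1 : R), (σ a.1 • b.2 + b.1 • a.2 : M)) := rfl

instance : Ring (NagataExt R M σ) :=
  { (inferInstance : AddCommGroup (NagataExt R M σ)),
    (inferInstance : Mul (NagataExt R M σ)),
    (inferInstance : One (NagataExt R M σ)) with
    mul_assoc := by
      rintro ⟨a1, a2⟩ ⟨b1, b2⟩ ⟨c1, c2⟩
      refine Prod.ext ?_ ?_
      · show a1 * b1 * c1 = a1 * (b1 * c1); ring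
      · show σ (a1 * b1) • c2 + c1 • (σ a1 • b2 + b1 • a2)
          = σ a1 • (σ b1 • c2 + c1 • b2) + (b1 * c1) • a2
        simp only [map_mul, smul_add, smul_smul]
        rw [mul_comm c1 (σ a1), mul_comm c1 b1]; abel
    one_mul := by
      rintro ⟨a1, a2⟩
      refine Prod.ext ?_ ?_
      · show 1 * a1 = a1; ring
      · show σ 1 • a2 + a1 • (0 : M) = a2; simp
    mul_one := by
      rintro ⟨a1, a2⟩
      refine Prod.ext ?_ ?_
      · show a1 * 1 = a1; ring
      · show σ a1 • (0 : M) + (1 : R) • a2 = a2; simp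
    left_distrib := by
      rintro ⟨a1, a2⟩ ⟨b1, b2⟩ ⟨c1, c2⟩
      refine Prod.ext ?_ ?_
      · show a1 * (b1 + c1) = a1 * b1 + a1 * c1; ring
      · show σ a1 • (b2 + c2) + (b1 + c1) • a2
          = (σ a1 • b2 + b1 • a2) + (σ a1 • c2 + c1 • a2)
        simp only [smul_add, add_smul]; abel
    right_distrib := by
      rintro ⟨a1, a2⟩ ⟨b1, b2⟩ ⟨c1, c2⟩
      refine Prod.ext ?_ ?_
      · show (a1 + b1) * c1 = a1 * c1 + b1 * c1; ring
      · show σ (a1 + b1) • c2 + c1 • (a2 + b2)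
          = (σ a1 • c2 + c1 • a2) + (σ b1 • c2 + c1 • b2)
        simp only [map_add, smul_add, add_smul]; abel
    zero_mul := by
      rintro ⟨a1, a2⟩
      refine Prod.ext ?_ ?_
      · show (0 : R) * a1 = 0; ring
      · show σ 0 • a2 + a1 • (0 : M) = 0; simp
    mul_zero := by
      rintro ⟨a1, a2⟩
      refine Prod.ext ?_ ?_
      · show a1 * 0 = 0; ring
      · show σ a1 • (0 : M) + (0 : R) • a2 = 0; simp }

end NagataExt

/-- If a commutative ring `R` has only trivial idempotents, then the Nagata extension of
`R` by an `R`-module `M` and an endomorphism `σ` is i-reversible. -/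
theorem nagataExt_isIReversible (R M : Type*) [CommRing R] [AddCommGroup M] [Module R M]
    (σ : R →+* R) (h : HasOnlyTrivialIdempotents R) :
    IsIReversible (NagataExt R M σ) := by
  rintro ⟨a1, a2⟩ ⟨b1, b2⟩ hab hne
  have h1 : IsIdempotentElem (a1 * b1) := by
    have := congrArg Prod.fst hab
    exact this
  have h2 := congrArg Prod.snd hab
  change σ (a1 * b1) • (σ a1 • b2 + b1 • a2) + (a1 * b1) • (σ a1 • b2 + b1 • a2)
      = σ a1 • b2 + b1 • a2 at h2
  rcases h (a1 * b1) h1 with h0 | h1'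
  · exfalso
    apply hne
    have hm : σ (a1 * b1) • (σ a1 • b2 + b1 • a2) + (a1 * b1) • (σ a1 • b2 + b1 • a2)
        = σ a1 • b2 + b1 • a2 := h2
    rw [h0] at hm
    simp only [map_zero, zero_smul, add_zero, zero_add] at hm
    have : ((a1 * b1, σ a1 • b2 + b1 • a2) : NagataExt R M σ) = (0, 0) := by
      rw [h0, ← hm]
    exact (NagataExt.mul_def _ _).trans this
  · -- a1 * b1 = 1
    have hm : σ (a1 * b1) • (σ a1 • b2 + b1 • a2) + (a1 * b1) • (σ a1 • b2 + b1 • a2)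
        = σ a1 • b2 + b1 • a2 := h2
    rw [h1'] at hm
    simp only [map_one, one_smul] at hm
    have hz : σ a1 • b2 + b1 • a2 = 0 := right_eq_add.mp hm.symm
    -- derive the mirror relation
    have hz' : σ b1 • a2 + a1 • b2 = 0 := by
      have key := congrArg (fun m => (a1 * σ b1) • m) hz
      simp only [smul_add, smul_smul, smul_zero] at key
      have e1 : a1 * σ b1 * σ a1 = a1 := by
        rw [mul_assoc, ← map_mul, mul_comm b1 a1, h1', map_one, mul_one]
      have e2 : a1 * σ b1 * b1 = σ b1 := by
        rw [mul_comm (a1 * σ b1) b1, ← mul_assoc, mul_comm b1 a1, h1', one_mul]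
      rw [e1, e2] at key
      rw [add_comm]; exact key
    unfold IsIdempotentElem
    rw [NagataExt.mul_def]
    refine Prod.ext ?_ ?_
    · show b1 * a1 * (b1 * a1) = b1 * a1
      rw [mul_comm b1 a1, h1', mul_one]
    · show σ (b1 * a1) • (σ b1 • a2 + a1 • b2) + (b1 * a1) • (σ b1 • a2 + a1 • b2)
        = σ b1 • a2 + a1 • b2
      rw [hz']; simp
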